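/- Let X be a compact Hausdorff topological space. Call a subset U ⊆ X a cozero set if U = {x | 0 < f(x)} for some f ∈ C(X, ℝ). For cozero sets U, V, say U is well inside V (written U ⋐ V) if there exists a cozero set W with W ∪ V = X and W ∩ U = ∅. Call a collection S of cozero sets a regular ideal if: ∅ ∈ S; U ∈ S whenever U is a cozero set with U ⊆ V for some V ∈ S; U ∪ V ∈ S whenever U, V ∈ S; and for every cozero set V, if every cozero set U with U ⋐ V belongs to S, then V ∈ S. Then the map S ↦ ⋃S (union of the members of S) is a bijection from the set of regular ideals of the cozero sets of X onto the topology of X, and this bijection is an order isomorphism with respect to inclusion on both sides. -/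

import Mathlib

/-- A cozero set of a topological space `X`. -/
def IsCozero {X : Type*} [TopologicalSpace X] (U : Set X) : Prop :=
  ∃ f : C(X, ℝ), U = {x | 0 < f x}

/-- `U` is well inside `V`: some cozero set `W` satisfies `W ∪ V = X` and `W ∩ U = ∅`. -/
def WellInside {X : Type*} [TopologicalSpace X] (U V : Set X) : Prop :=
  ∃ W : Set X, IsCozero W ∧ W ∪ V = Set.univ ∧ W ∩ U = ∅

/-- A regular ideal of cozero sets: a collection of cozero sets containing `∅`, downward
closed among cozero sets, closed under binary unions, and containing every cozero set all of
whose well-inside approximations it contains. -/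
def IsRegularCozeroIdeal {X : Type*} [TopologicalSpace X] (S : Set (Set X)) : Prop :=
  (∀ U ∈ S, IsCozero U) ∧
  (∅ : Set X) ∈ S ∧
  (∀ U V : Set X, IsCozero U → U ⊆ V → V ∈ S → U ∈ S) ∧
  (∀ U ∈ S, ∀ V ∈ S, U ∪ V ∈ S) ∧
  (∀ V : Set X, IsCozero V → (∀ U : Set X, IsCozero U → WellInside U V → U ∈ S) → V ∈ S)

section Aux

variable {X : Type*} [TopologicalSpace X]

lemma IsCozero.isOpen {U : Set X} (h : IsCozero U) : IsOpen U := by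
  obtain ⟨f, rfl⟩ := h
  exact isOpen_lt continuous_const f.continuous

lemma isCozero_empty : IsCozero (∅ : Set X) :=
  ⟨0, by ext x; simp⟩

lemma IsCozero.union {U V : Set X} (hU : IsCozero U) (hV : IsCozero V) :
    IsCozero (U ∪ V) := by
  obtain ⟨f, rfl⟩ := hU
  obtain ⟨g, rfl⟩ := hV
  exact ⟨f ⊔ g, by ext x; simp [lt_max_iff]⟩

lemma WellInside.closure_subset {U V : Set X} (h : WellInside U V) :
    closure U ⊆ V := by
  obtain ⟨W, hW, hWV, hWU⟩ := h
  have hUc : U ⊆ Wᶜ := fun x hx hxW => Set.eq_empty_iff_forall_notMem.mp hWU x ⟨hxW, hx⟩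
  have h1 : closure U ⊆ Wᶜ := closure_minimal hUc hW.isOpen.isClosed_compl
  intro x hx
  rcases Set.eq_univ_iff_forall.mp hWV x with hw | hv
  · exact absurd hw (h1 hx)
  · exact hv

lemma wellInside_of_closure_subset [NormalSpace X] {U V : Set X} (hV : IsOpen V)
    (h : closure U ⊆ V) : WellInside U V := by
  obtain ⟨f, hf0, hf1, -⟩ := exists_continuous_zero_one_of_isClosed isClosed_closure
    hV.isClosed_compl (by rw [Set.disjoint_compl_right_iff_subset]; exact h)
  refine ⟨{x | 0 < f x}, ⟨f, rfl⟩, ?_, ?_⟩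
  · rw [Set.eq_univ_iff_forall]
    intro x
    by_cases hx : x ∈ V
    · exact Or.inr hx
    · refine Or.inl ?_
      have : f x = 1 := hf1 hx
      simp [Set.mem_setOf_eq, this]
  · rw [Set.eq_empty_iff_forall_notMem]
    rintro x ⟨hx, hxU⟩
    have : f x = 0 := hf0 (subset_closure hxU)
    simp only [Set.mem_setOf_eq, this] at hx
    exact lt_irrefl 0 hx

/-- A finite union of members of a regular ideal is a member. -/
lemma sUnion_mem_of_finite {S : Set (Set X)} (hS : IsRegularCozeroIdeal S)
    {t : Set (Set X)} (htf : t.Finite) (hts : t ⊆ S) : ⋃₀ t ∈ S := by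
  refine Set.Finite.induction_on (motive := fun t _ => t ⊆ S → ⋃₀ t ∈ S) t htf
    (fun _ => by simpa using hS.2.1) ?_ hts
  intro a s _ _ ih has
  rw [Set.sUnion_insert]
  exact hS.2.2.2.1 a (has (Set.mem_insert a s)) _
    (ih (fun x hx => has (Set.mem_insert_of_mem a hx)))

/-- Monotonicity: if the union of `S` is contained in the union of `T`, then `S ⊆ T`. -/
lemma regular_mono [CompactSpace X] [T2Space X] {S T : Set (Set X)}
    (hS : IsRegularCozeroIdeal S) (hT : IsRegularCozeroIdeal T)
    (h : ⋃₀ S ⊆ ⋃₀ T) : S ⊆ T := by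
  intro V hV
  refine hT.2.2.2.2 V (hS.1 V hV) ?_
  intro U hU hUV
  have hcl : closure U ⊆ ⋃₀ T := hUV.closure_subset.trans
    ((Set.subset_sUnion_of_mem hV).trans h)
  rw [Set.sUnion_eq_biUnion] at hcl
  have hcomp : IsCompact (closure U) := isClosed_closure.isCompact
  obtain ⟨t, htT, htf, hsub⟩ := hcomp.elim_finite_subcover_image
    (fun W hW => (hT.1 W hW).isOpen) hcl
  have ht : ⋃₀ t ∈ T := sUnion_mem_of_finite hT htf htT
  refine hT.2.2.1 U _ hU ?_ ht
  rw [Set.sUnion_eq_biUnion]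
  exact subset_closure.trans hsub

variable (X) in
/-- The canonical regular ideal associated to an open set. -/
def canonicalIdeal (U : Set X) : Set (Set X) := {V | IsCozero V ∧ V ⊆ U}

lemma canonicalIdeal_isRegular [CompactSpace X] [T2Space X] {U : Set X} :
    IsRegularCozeroIdeal (canonicalIdeal X U) := by
  refine ⟨fun V hV => hV.1, ⟨isCozero_empty, Set.empty_subset U⟩,
    fun A B hA hAB hB => ⟨hA, hAB.trans hB.2⟩,
    fun A hA B hB => ⟨hA.1.union hB.1, Set.union_subset hA.2 hB.2⟩, ?_⟩
  rintro V ⟨f, rfl⟩ hreg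
  refine ⟨⟨f, rfl⟩, ?_⟩
  intro x hx
  have hfx : (0 : ℝ) < f x := hx
  set g : C(X, ℝ) := f - ContinuousMap.const X (f x / 2) with hg
  have hgx : ∀ y, g y = f y - f x / 2 := fun y => rfl
  have hsub : closure {y | 0 < g y} ⊆ {y | 0 < f y} := by
    have h1 : closure {y | 0 < g y} ⊆ {y | 0 ≤ g y} :=
      closure_minimal (fun y hy => le_of_lt (show (0:ℝ) < g y from hy))
        (isClosed_le continuous_const g.continuous)
    intro y hy
    have h2 : 0 ≤ g y := h1 hy
    have h3 := hgx y
    show (0 : ℝ) < f y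
    linarith
  have hmem := hreg {y | 0 < g y} ⟨g, rfl⟩
    (wellInside_of_closure_subset (isOpen_lt continuous_const f.continuous) hsub)
  refine hmem.2 ?_
  show (0 : ℝ) < g x
  rw [hgx]
  linarith

lemma sUnion_canonicalIdeal [CompactSpace X] [T2Space X] {U : Set X} (hU : IsOpen U) :
    ⋃₀ canonicalIdeal X U = U := by
  apply Set.Subset.antisymm
  · exact Set.sUnion_subset (fun V hV => hV.2)
  · intro x hx
    obtain ⟨f, hf0, hf1, -⟩ := exists_continuous_zero_one_of_isClosed hU.isClosed_compl
      (isClosed_singleton (x := x)) (by simp [Set.disjoint_compl_left_iff_subset, hx])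
    refine Set.mem_sUnion.mpr ⟨{y | 0 < f y}, ⟨⟨f, rfl⟩, ?_⟩, ?_⟩
    · intro y hy
      by_contra hyU
      have : f y = 0 := hf0 hyU
      simp only [Set.mem_setOf_eq, this] at hy
      exact lt_irrefl 0 hy
    · have : f x = 1 := hf1 rfl
      simp [Set.mem_setOf_eq, this]

end Aux

/-- For a compact Hausdorff space `X`, the map `S ↦ ⋃S` is an order isomorphism from the
regular ideals of cozero sets of `X` onto the topology of `X`. -/
theorem regularCozeroIdeals_orderIso_topology {X : Type*} [TopologicalSpace X]
    [CompactSpace X] [T2Space X] :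
    (∀ S : Set (Set X), IsRegularCozeroIdeal S → IsOpen (⋃₀ S)) ∧
    (∀ U : Set X, IsOpen U → ∃! S : Set (Set X), IsRegularCozeroIdeal S ∧ ⋃₀ S = U) ∧
    (∀ S T : Set (Set X), IsRegularCozeroIdeal S → IsRegularCozeroIdeal T →
        (S ⊆ T ↔ ⋃₀ S ⊆ ⋃₀ T)) := by
  refine ⟨fun S hS => isOpen_sUnion (fun V hV => (hS.1 V hV).isOpen), ?_, ?_⟩
  · intro U hU
    refine ⟨canonicalIdeal X U, ⟨canonicalIdeal_isRegular, sUnion_canonicalIdeal hU⟩, ?_⟩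
    rintro T ⟨hT, hTU⟩
    have e1 : ⋃₀ T ⊆ ⋃₀ canonicalIdeal X U := by
      rw [hTU, sUnion_canonicalIdeal hU]
    have e2 : ⋃₀ canonicalIdeal X U ⊆ ⋃₀ T := by
      rw [hTU, sUnion_canonicalIdeal hU]
    exact Set.Subset.antisymm (regular_mono hT canonicalIdeal_isRegular e1)
      (regular_mono canonicalIdeal_isRegular hT e2)
  · intro S T hS hT
    exact ⟨fun h => Set.sUnion_subset_sUnion h, fun h => regular_mono hS hT h⟩
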